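/- Let β > 0, I = [−β/2, β/2], and let ℙ be any probability measure on E^I (product σ-algebra) satisfying ∫ f₁(x(t₁))⋯fₙ(x(tₙ)) dℙ(x) = 𝒮_{f₁,…,fₙ}(t₁,…,tₙ) for all n ≥ 1, (t₁,…,tₙ) ∈ I^n_≤ and fᵢ ∈ C(E,ℂ). Suppose the family satisfies the Osterwalder–Schrader positivity condition: for all n, m ≥ 1, all 0 ≤ t₁ ≤ ⋯ ≤ tₙ ≤ β/2, all f_{k,1},…,f_{k,n} ∈ C(E,ℂ) (k = 1,…,m) and all c₁,…,c_m ∈ ℂ, the number ∑_{k,l=1}^{m} conj(c_k)·c_l·𝒮_{f̄_{k,n},…,f̄_{k,1}, f_{l,1},…,f_{l,n}}(−tₙ,…,−t₁, t₁,…,tₙ) is real and nonnegative. Then for every n ≥ 1, every 0 ≤ t₁ ≤ ⋯ ≤ tₙ ≤ β/2, and every bounded Borel measurable function F : Eⁿ → ℂ, the integral ∫_{E^I} conj(F(x(−t₁),…,x(−tₙ)))·F(x(t₁),…,x(tₙ)) dℙ(x) is real and nonnegative. -/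

import Mathlib

open MeasureTheory ComplexConjugate
open scoped ENNReal

set_option maxHeartbeats 1000000 in

/-- **Osterwalder–Schrader positivity.** Let `β > 0`, `I = [−β/2, β/2]`,
and let `ℙ` be a probability measure on `E^I` whose moments along nondecreasing tuples of
times are given by the moment family `𝒮`.  If `𝒮` satisfies OS positivity, then for all
`0 ≤ t₁ ≤ ⋯ ≤ tₙ ≤ β/2` and every bounded Borel measurable `F : Eⁿ → ℂ`, the integral
`∫ conj(F(x(−t₁),…,x(−tₙ))) · F(x(t₁),…,x(tₙ)) dℙ(x)` is real and nonnegative. -/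
theorem stmt_6
    (E : Type) [TopologicalSpace E] [CompactSpace E] [T2Space E]
    [SecondCountableTopology E] [MeasurableSpace E] [BorelSpace E]
    (β : ℝ) (hβ : 0 < β)
    (I : Set ℝ) (hIdef : I = Set.Icc (-(β / 2)) (β / 2))
    (S : ∀ n : ℕ, (Fin n → C(E, ℂ)) → (Fin n → ℝ) → ℂ)
    (hScont : ∀ (n : ℕ) (f : Fin n → C(E, ℂ)),
      ContinuousOn (S n f) {t : Fin n → ℝ | (∀ i, t i ∈ I) ∧ Monotone t})
    (hSlin : ∀ (n : ℕ) (t : Fin n → ℝ), (∀ i, t i ∈ I) → Monotone t →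
      ∀ (f : Fin n → C(E, ℂ)) (i : Fin n) (c : ℂ) (g h : C(E, ℂ)),
        S n (Function.update f i (c • g + h)) t
          = c * S n (Function.update f i g) t + S n (Function.update f i h) t)
    (hSbdd : ∀ (n : ℕ) (t : Fin n → ℝ), (∀ i, t i ∈ I) → Monotone t →
      ∃ C > 0, ∀ f : Fin n → C(E, ℂ), ‖S n f t‖ ≤ C * ∏ i, ‖f i‖)
    (hScons : ∀ (n : ℕ) (t : Fin (n + 1) → ℝ), (∀ i, t i ∈ I) → Monotone t →
      ∀ (f : Fin (n + 1) → C(E, ℂ)) (i : Fin (n + 1)), f i = 1 →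
        S (n + 1) f t = S n (f ∘ i.succAbove) (t ∘ i.succAbove))
    (hSnorm : ∀ t : Fin 1 → ℝ, (∀ i, t i ∈ I) → S 1 (fun _ => 1) t = 1)
    (hSpos : ∀ (n : ℕ) (t : Fin n → ℝ), (∀ i, t i ∈ I) → Monotone t →
      ∀ f : Fin n → C(E, ℂ), (∀ i x, (f i x).im = 0 ∧ 0 ≤ (f i x).re) →
        0 ≤ (S n f t).re ∧ (S n f t).im = 0)
    (P : Measure (I → E)) (hP : IsProbabilityMeasure P)
    (hPmom : ∀ n : ℕ, 1 ≤ n → ∀ t : Fin n → ℝ, ∀ ht : ∀ i, t i ∈ I, Monotone t →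
      ∀ f : Fin n → C(E, ℂ),
        ∫ x, ∏ i, f i (x ⟨t i, ht i⟩) ∂P = S n f t)
    (hOS : ∀ (n m : ℕ), 1 ≤ n → 1 ≤ m → ∀ t : Fin n → ℝ, Monotone t →
      (∀ i, t i ∈ Set.Icc 0 (β / 2)) →
      ∀ (f : Fin m → Fin n → C(E, ℂ)) (c : Fin m → ℂ),
        0 ≤ (∑ k, ∑ l, conj (c k) * c l *
              S (n + n) (Fin.append (fun i => star (f k i.rev)) (f l))
                (Fin.append (fun i => -(t i.rev)) t)).re ∧
        (∑ k, ∑ l, conj (c k) * c l *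
              S (n + n) (Fin.append (fun i => star (f k i.rev)) (f l))
                (Fin.append (fun i => -(t i.rev)) t)).im = 0) :
    ∀ n : ℕ, 1 ≤ n → ∀ t : Fin n → ℝ, Monotone t →
      (∀ i, t i ∈ Set.Icc 0 (β / 2)) →
      ∀ τ σ : Fin n → I, (∀ i, (τ i : ℝ) = -(t i)) → (∀ i, (σ i : ℝ) = t i) →
      ∀ F : (Fin n → E) → ℂ, Measurable F → (∃ C : ℝ, ∀ y, ‖F y‖ ≤ C) →
        0 ≤ (∫ x, conj (F fun i => x (τ i)) * F (fun i => x (σ i)) ∂P).re ∧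
        (∫ x, conj (F fun i => x (τ i)) * F (fun i => x (σ i)) ∂P).im = 0 := by
  intro n hn t htmono htmem τ σ hτ hσ F hFmeas hFbdd
  classical
  obtain ⟨C, hC⟩ := hFbdd
  -- nonemptiness and nonnegativity of the bound
  have h0I : (0 : ℝ) ∈ I := by rw [hIdef]; constructor <;> linarith
  have hEne : Nonempty E := by
    by_contra h
    rw [not_nonempty_iff] at h
    have h2 : IsEmpty (I → E) := ⟨fun x => h.false (x ⟨0, h0I⟩)⟩
    have h3 := hP.measure_univ
    rw [Set.univ_eq_empty_iff.mpr h2, measure_empty] at h3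
    exact zero_ne_one h3
  have hC0 : 0 ≤ C := le_trans (norm_nonneg _) (hC (Classical.arbitrary _))
  -- membership of the times in I
  have htI : ∀ i, t i ∈ I := fun i => by
    rw [hIdef]; exact ⟨by linarith [(htmem i).1], (htmem i).2⟩
  have htnegI : ∀ i, -t i ∈ I := fun i => by
    rw [hIdef]
    exact ⟨by linarith [(htmem i).2], by linarith [(htmem i).1]⟩
  -- the doubled time vector
  set u : Fin (n + n) → ℝ := Fin.append (fun i => -(t i.rev)) t with hu
  have humem : ∀ j, u j ∈ I := by
    refine Fin.addCases (fun i => ?_) (fun i => ?_)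
    · rw [hu, Fin.append_left]; exact htnegI i.rev
    · rw [hu, Fin.append_right]; exact htI i
  have hrepr : ∀ j : Fin (n + n),
      (∃ i : Fin n, j = Fin.castAdd n i) ∨ (∃ i : Fin n, j = Fin.natAdd n i) :=
    fun j => Fin.addCases (fun i => Or.inl ⟨i, rfl⟩) (fun i => Or.inr ⟨i, rfl⟩) j
  have humono : Monotone u := by
    intro j k hjk
    rw [Fin.le_def] at hjk
    rcases hrepr j with ⟨a, rfl⟩ | ⟨a, rfl⟩ <;> rcases hrepr k with ⟨b, rfl⟩ | ⟨b, rfl⟩ <;>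
        simp only [Fin.coe_castAdd, Fin.coe_natAdd] at hjk <;>
        rw [hu] <;>
        simp only [Fin.append_left, Fin.append_right]
    · exact neg_le_neg (htmono (Fin.rev_le_rev.mpr (Fin.le_def.mpr hjk)))
    · have h1 := (htmem a.rev).1; have h2 := (htmem b).1; linarith
    · exact absurd hjk (by have := b.isLt; omega)
    · exact htmono (Fin.le_def.mpr (by omega))
  -- the points of I given by u agree with τ ∘ rev and σ
  have hptτ : ∀ i : Fin n, (⟨u (Fin.castAdd n i), humem _⟩ : I) = τ i.rev := by
    intro i
    apply Subtype.ext
    show u (Fin.castAdd n i) = ((τ i.rev : I) : ℝ)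
    rw [hu, Fin.append_left]
    exact (hτ i.rev).symm
  have hptσ : ∀ i : Fin n, (⟨u (Fin.natAdd n i), humem _⟩ : I) = σ i := by
    intro i
    apply Subtype.ext
    show u (Fin.natAdd n i) = ((σ i : I) : ℝ)
    rw [hu, Fin.append_right]
    exact (hσ i).symm
  -- pointwise product identity
  have term : ∀ (g h : Fin n → C(E, ℂ)) (x : I → E),
      (∏ j, (Fin.append (fun i => star (g i.rev)) h) j (x ⟨u j, humem j⟩))
        = conj (∏ i, g i (x (τ i))) * ∏ i, h i (x (σ i)) := by
    intro g h x
    rw [Fin.prod_univ_add]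
    congr 1
    · calc (∏ i : Fin n, (Fin.append (fun i => star (g i.rev)) h)
            (Fin.castAdd n i) (x ⟨u (Fin.castAdd n i), humem _⟩))
          = ∏ i : Fin n, conj (g i.rev (x (τ i.rev))) := by
            refine Finset.prod_congr rfl fun i _ => ?_
            rw [Fin.append_left, hptτ i]
            rfl
        _ = ∏ i : Fin n, conj (g i (x (τ i))) :=
            Fin.rev_bijective.prod_comp (fun i => conj (g i (x (τ i))))
        _ = conj (∏ i, g i (x (τ i))) := (map_prod (starRingEnd ℂ) _ _).symm
    · refine Finset.prod_congr rfl fun i _ => ?_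
      rw [Fin.append_right, hptσ i]
  have hnn : 1 ≤ n + n := by omega
  -- the moment identity for products
  have pair : ∀ g h : Fin n → C(E, ℂ),
      (∫ x, conj (∏ i, g i (x (τ i))) * ∏ i, h i (x (σ i)) ∂P)
        = S (n + n) (Fin.append (fun i => star (g i.rev)) h) u := by
    intro g h
    rw [← hPmom (n + n) hnn u humem humono (Fin.append (fun i => star (g i.rev)) h)]
    exact integral_congr_ae (Filter.Eventually.of_forall fun x => (term g h x).symm)
  -- measurability and integrability helpers
  have measprod : ∀ (g : Fin n → C(E, ℂ)) (ρ : Fin n → I),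
      Measurable fun x : I → E => ∏ i, g i (x (ρ i)) := fun g ρ =>
    Finset.measurable_prod _ fun i _ =>
      ((g i).continuous.measurable).comp (measurable_pi_apply _)
  have int_of_bdd : ∀ (φ : (I → E) → ℂ), Measurable φ → ∀ D : ℝ, (∀ x, ‖φ x‖ ≤ D) →
      Integrable φ P := fun φ hm D hD =>
    memLp_one_iff_integrable.mp
      (MemLp.of_bound hm.aestronglyMeasurable D (Filter.Eventually.of_forall hD))
  have prodbd : ∀ (g : Fin n → C(E, ℂ)) (ρ : Fin n → I) (x : I → E),
      ‖∏ i, g i (x (ρ i))‖ ≤ ∏ i, ‖g i‖ := fun g ρ x => by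
    rw [norm_prod]
    exact Finset.prod_le_prod (fun i _ => norm_nonneg _)
      (fun i _ => (g i).norm_coe_le_norm _)
  -- OS positivity for sums of products
  have QSOP : ∀ (m : ℕ) (f : Fin m → Fin n → C(E, ℂ)) (c : Fin m → ℂ),
      0 ≤ (∫ x, conj (∑ k, c k * ∏ i, f k i (x (τ i))) *
            ∑ l, c l * ∏ i, f l i (x (σ i)) ∂P).re ∧
        (∫ x, conj (∑ k, c k * ∏ i, f k i (x (τ i))) *
            ∑ l, c l * ∏ i, f l i (x (σ i)) ∂P).im = 0 := by
    intro m f c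
    rcases Nat.eq_zero_or_pos m with rfl | hm
    · simp
    · have hint : ∀ k l : Fin m, Integrable (fun x : I → E =>
          (conj (c k) * c l) * (conj (∏ i, f k i (x (τ i))) * ∏ i, f l i (x (σ i)))) P := by
        intro k l
        refine int_of_bdd _ ?_
          (‖conj (c k) * c l‖ * ((∏ i, ‖f k i‖) * ∏ i, ‖f l i‖)) ?_
        · exact measurable_const.mul
            ((continuous_star.measurable.comp (measprod (f k) τ)).mul (measprod (f l) σ))
        · intro x
          rw [norm_mul]
          refine mul_le_mul_of_nonneg_left ?_ (norm_nonneg _)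
          rw [norm_mul]
          have h1 : ‖conj (∏ i, f k i (x (τ i)))‖ ≤ ∏ i, ‖f k i‖ := by
            rw [RCLike.norm_conj]; exact prodbd (f k) τ x
          exact mul_le_mul h1 (prodbd (f l) σ x) (norm_nonneg _)
            (Finset.prod_nonneg fun i _ => norm_nonneg _)
      have hfun : (fun x : I → E => conj (∑ k, c k * ∏ i, f k i (x (τ i))) *
            ∑ l, c l * ∏ i, f l i (x (σ i)))
          = fun x => ∑ k, ∑ l, (conj (c k) * c l) *
              (conj (∏ i, f k i (x (τ i))) * ∏ i, f l i (x (σ i))) := by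
        funext x
        rw [map_sum, Finset.sum_mul_sum]
        refine Finset.sum_congr rfl fun k _ => Finset.sum_congr rfl fun l _ => ?_
        rw [map_mul]; ring
      rw [hfun, integral_finset_sum _ (fun k _ => integrable_finset_sum _ fun l _ => hint k l)]
      have hterm : ∀ k : Fin m, (∫ x, ∑ l, (conj (c k) * c l) *
            (conj (∏ i, f k i (x (τ i))) * ∏ i, f l i (x (σ i))) ∂P)
          = ∑ l, conj (c k) * c l *
              S (n + n) (Fin.append (fun i => star (f k i.rev)) (f l)) u := by
        intro k
        rw [integral_finset_sum _ fun l _ => hint k l]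
        refine Finset.sum_congr rfl fun l _ => ?_
        rw [MeasureTheory.integral_const_mul, pair (f k) (f l)]
      simp only [hterm]
      have h := hOS n m hn hm t htmono htmem f c
      rwa [← hu] at h
  -- the evaluation maps and mapped measures
  have hTτm : Measurable fun (x : I → E) (i : Fin n) => x (τ i) :=
    measurable_pi_lambda _ fun i => measurable_pi_apply _
  have hTσm : Measurable fun (x : I → E) (i : Fin n) => x (σ i) :=
    measurable_pi_lambda _ fun i => measurable_pi_apply _
  set Tτ : (I → E) → Fin n → E := fun x i => x (τ i) with hTτdef
  set Tσ : (I → E) → Fin n → E := fun x i => x (σ i) with hTσdef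
  set μτ : Measure (Fin n → E) := P.map Tτ with hμτdef
  set μσ : Measure (Fin n → E) := P.map Tσ with hμσdef
  haveI hμτP : IsProbabilityMeasure μτ := Measure.isProbabilityMeasure_map hTτm.aemeasurable
  haveI hμσP : IsProbabilityMeasure μσ := Measure.isProbabilityMeasure_map hTσm.aemeasurable
  set ν : Measure (Fin n → E) := μτ + μσ with hν
  haveI hνfin : IsFiniteMeasure ν := by rw [hν]; infer_instance
  have hνuniv : ν Set.univ = 2 := by
    rw [hν, Measure.add_apply, measure_univ, measure_univ]; norm_num
  -- membership in L² of bounded measurable composites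
  have memP2 : ∀ (G : (Fin n → E) → ℂ) (T : (I → E) → Fin n → E), Measurable G →
      Measurable T → ∀ D : ℝ, (∀ y, ‖G y‖ ≤ D) → MemLp (fun x => G (T x)) 2 P :=
    fun G T hG hT D hD => MemLp.of_bound ((hG.comp hT).aestronglyMeasurable) D
      (Filter.Eventually.of_forall fun x => hD _)
  -- the Stone–Weierstrass subalgebra of sums of products
  let A : StarSubalgebra ℂ C(Fin n → E, ℂ) :=
    { carrier := {G : C(Fin n → E, ℂ) |
        ∃ (m : ℕ) (f : Fin m → Fin n → C(E, ℂ)) (c : Fin m → ℂ),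
          ∀ y, G y = ∑ k, c k * ∏ i, f k i (y i)}
      mul_mem' := by
        rintro a b ⟨m1, f1, c1, h1⟩ ⟨m2, f2, c2, h2⟩
        refine ⟨m1 * m2,
          fun j i => f1 (finProdFinEquiv.symm j).1 i * f2 (finProdFinEquiv.symm j).2 i,
          fun j => c1 (finProdFinEquiv.symm j).1 * c2 (finProdFinEquiv.symm j).2,
          fun y => ?_⟩
        calc (a * b) y = (∑ k, c1 k * ∏ i, f1 k i (y i)) *
              ∑ l, c2 l * ∏ i, f2 l i (y i) := by
              rw [ContinuousMap.mul_apply, h1 y, h2 y]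
          _ = ∑ p : Fin m1 × Fin m2,
              (c1 p.1 * c2 p.2) * ∏ i, (f1 p.1 i * f2 p.2 i) (y i) := by
              rw [Fintype.sum_mul_sum, Fintype.sum_prod_type]
              refine Finset.sum_congr rfl fun k _ => Finset.sum_congr rfl fun l _ => ?_
              simp only [ContinuousMap.mul_apply, Finset.prod_mul_distrib]
              ring
          _ = _ := by
              refine Fintype.sum_equiv finProdFinEquiv _ _ fun p => ?_
              simp
      add_mem' := by
        rintro a b ⟨m1, f1, c1, h1⟩ ⟨m2, f2, c2, h2⟩
        refine ⟨m1 + m2, Fin.append f1 f2, Fin.append c1 c2, fun y => ?_⟩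
        rw [ContinuousMap.add_apply, h1 y, h2 y, Fin.sum_univ_add]
        congr 1 <;> refine Finset.sum_congr rfl fun k _ => ?_ <;>
          simp [Fin.append_left, Fin.append_right]
      algebraMap_mem' := by
        intro z
        refine ⟨1, fun _ _ => 1, fun _ => z, fun y => ?_⟩
        simp [Algebra.algebraMap_eq_smul_one]
      star_mem' := by
        rintro a ⟨m, f, c, h⟩
        refine ⟨m, fun k i => star (f k i), fun k => conj (c k), fun y => ?_⟩
        rw [ContinuousMap.star_apply, h y]
        rw [star_sum]
        refine Finset.sum_congr rfl fun k _ => ?_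
        rw [star_mul', star_prod]
        refine congrArg (fun w => conj (c k) * w) ?_
        refine Finset.prod_congr rfl fun i _ => ?_
        rw [ContinuousMap.star_apply] }
  -- A separates points
  have hsep : A.SeparatesPoints := by
    intro y y' hyy'
    obtain ⟨i, hi⟩ : ∃ i, y i ≠ y' i := by
      by_contra h; push_neg at h; exact hyy' (funext h)
    obtain ⟨f, hf0, hf1, -⟩ := exists_continuous_zero_one_of_isClosed
      (isClosed_singleton (x := y i)) (isClosed_singleton (x := y' i))
      (Set.disjoint_singleton.mpr hi)
    let g : C(E, ℂ) := ContinuousMap.comp ⟨Complex.ofReal, Complex.continuous_ofReal⟩ f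
    let G : C(Fin n → E, ℂ) := g.comp ⟨fun y0 => y0 i, continuous_apply i⟩
    have hGA : G ∈ A := by
      refine ⟨1, fun _ => Function.update (fun _ => (1 : C(E, ℂ))) i g, fun _ => 1,
        fun y0 => ?_⟩
      rw [Fin.sum_univ_one, one_mul]
      rw [Finset.prod_eq_single i (fun j _ hj => by
        simp [Function.update_of_ne hj]) (by simp)]
      simp [G, g]
    refine ⟨(G : (Fin n → E) → ℂ), ⟨G, hGA, rfl⟩, ?_⟩
    have h0 : G y = ((f (y i) : ℝ) : ℂ) := rfl
    have h1 : G y' = ((f (y' i) : ℝ) : ℂ) := rfl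
    rw [h0, h1, hf0 rfl, hf1 rfl]
    norm_num
  -- Stone–Weierstrass approximation
  have hSWtop := ContinuousMap.starSubalgebra_topologicalClosure_eq_top_of_separatesPoints A hsep
  have hSWapprox : ∀ (g : C(Fin n → E, ℂ)) (η : ℝ), 0 < η →
      ∃ G ∈ A, ∀ y, ‖g y - G y‖ ≤ η := by
    intro g η hη
    have hg : g ∈ closure (A : Set C(Fin n → E, ℂ)) := by
      rw [← StarSubalgebra.topologicalClosure_coe, hSWtop]
      trivial
    rcases Metric.mem_closure_iff.mp hg η hη with ⟨G, hGA, hdist⟩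
    refine ⟨G, hGA, fun y => ?_⟩
    calc ‖g y - G y‖ = dist (g y) (G y) := (dist_eq_norm _ _).symm
      _ ≤ dist g G := ContinuousMap.dist_apply_le_dist y
      _ ≤ η := hdist.le
  -- the L² elements associated to F
  have haF : MemLp (fun x => F (Tτ x)) 2 P := memP2 F Tτ hFmeas hTτm C hC
  have hbF : MemLp (fun x => F (Tσ x)) 2 P := memP2 F Tσ hFmeas hTσm C hC
  set AF := haF.toLp _ with hAFdef
  set BF := hbF.toLp _ with hBFdef
  have hQF : (∫ x, conj (F (Tτ x)) * F (Tσ x) ∂P) = (inner ℂ AF BF : ℂ) := by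
    rw [L2.inner_def]
    refine integral_congr_ae ?_
    filter_upwards [haF.coeFn_toLp, hbF.coeFn_toLp] with x h1 h2
    rw [h1, h2, RCLike.inner_apply, mul_comm]
  have hAFnorm : ‖AF‖ ≤ C := by
    rw [hAFdef, Lp.norm_toLp]
    refine ENNReal.toReal_le_of_le_ofReal hC0 ?_
    simpa using eLpNorm_le_of_ae_bound (μ := P) (p := 2)
      (Filter.Eventually.of_forall fun x => hC (Tτ x))
  have hBFnorm : ‖BF‖ ≤ C := by
    rw [hBFdef, Lp.norm_toLp]
    refine ENNReal.toReal_le_of_le_ofReal hC0 ?_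
    simpa using eLpNorm_le_of_ae_bound (μ := P) (p := 2)
      (Filter.Eventually.of_forall fun x => hC (Tσ x))
  -- the approximation step
  have approx : ∀ ε : ℝ, 0 < ε →
      ∃ z : ℂ, (0 ≤ z.re ∧ z.im = 0) ∧ ‖(inner ℂ AF BF : ℂ) - z‖ ≤ ε := by
    intro ε hε
    have hden : (0:ℝ) < 6 * C + 9 := by linarith
    set η := min 1 (ε / (6 * C + 9)) with hηdef
    have hη : 0 < η := lt_min one_pos (div_pos hε hden)
    have hη1 : η ≤ 1 := min_le_left _ _
    -- approximate F in L²(ν) by a bounded continuous function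
    have hFν : MemLp F 2 ν :=
      MemLp.of_bound hFmeas.aestronglyMeasurable C (Filter.Eventually.of_forall hC)
    obtain ⟨g, hgF, -⟩ := hFν.exists_boundedContinuous_eLpNorm_sub_le
      (by norm_num) (ε := ENNReal.ofReal η) (by simp [hη, hη.le, ne_of_gt hη])
    -- approximate g uniformly by an element of A
    obtain ⟨G, hGA, hGg⟩ := hSWapprox g.toContinuousMap η hη
    obtain ⟨m, f, c, hGform⟩ := hGA
    have hGmeas : Measurable (G : (Fin n → E) → ℂ) := G.continuous.measurable
    have hGbd : ∀ y, ‖(G : (Fin n → E) → ℂ) y‖ ≤ ‖G‖ := fun y => G.norm_coe_le_norm y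
    have haG : MemLp (fun x => G (Tτ x)) 2 P := memP2 _ Tτ hGmeas hTτm _ hGbd
    have hbG : MemLp (fun x => G (Tσ x)) 2 P := memP2 _ Tσ hGmeas hTσm _ hGbd
    set AG := haG.toLp _ with hAGdef
    set BG := hbG.toLp _ with hBGdef
    have hQG : (∫ x, conj (G (Tτ x)) * G (Tσ x) ∂P) = (inner ℂ AG BG : ℂ) := by
      rw [L2.inner_def]
      refine integral_congr_ae ?_
      filter_upwards [haG.coeFn_toLp, hbG.coeFn_toLp] with x h1 h2
      rw [h1, h2, RCLike.inner_apply, mul_comm]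
    -- positivity of the approximant's quadratic form
    have hzpos : 0 ≤ (inner ℂ AG BG : ℂ).re ∧ (inner ℂ AG BG : ℂ).im = 0 := by
      have h0 := QSOP m f c
      have heq : (∫ x, conj (G (Tτ x)) * G (Tσ x) ∂P)
          = ∫ x, conj (∑ k, c k * ∏ i, f k i (x (τ i))) *
              ∑ l, c l * ∏ i, f l i (x (σ i)) ∂P := by
        refine integral_congr_ae (Filter.Eventually.of_forall fun x => ?_)
        dsimp only
        rw [hGform (Tτ x), hGform (Tσ x)]
      rw [heq] at hQG
      rw [← hQG]
      exact h0
    -- L² distance between F and G with respect to ν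
    have hconts : AEStronglyMeasurable (fun y : Fin n → E => F y - G y) ν :=
      (hFmeas.sub hGmeas).aestronglyMeasurable
    have hdν : eLpNorm (fun y : Fin n → E => F y - G y) 2 ν ≤ ENNReal.ofReal (3 * η) := by
      have hdecomp : (fun y : Fin n → E => F y - G y)
          = (F - (g : (Fin n → E) → ℂ)) + fun y => g y - G y := by
        funext y; simp
      have htri : eLpNorm (fun y : Fin n → E => F y - G y) 2 ν ≤
          eLpNorm (F - (g : (Fin n → E) → ℂ)) 2 ν +
            eLpNorm (fun y : Fin n → E => g y - G y) 2 ν := by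
        rw [hdecomp]
        exact eLpNorm_add_le
          (hFmeas.aestronglyMeasurable.sub g.continuous.measurable.aestronglyMeasurable)
          (g.continuous.measurable.aestronglyMeasurable.sub
            hGmeas.aestronglyMeasurable) one_le_two
      have hgG : eLpNorm (fun y : Fin n → E => g y - G y) 2 ν ≤ ENNReal.ofReal (2 * η) := by
        calc eLpNorm (fun y : Fin n → E => g y - G y) 2 ν
            ≤ ν Set.univ ^ (2 : ℝ≥0∞).toReal⁻¹ * ENNReal.ofReal η :=
              eLpNorm_le_of_ae_bound (Filter.Eventually.of_forall fun y => hGg y)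
          _ ≤ 2 * ENNReal.ofReal η := by
              rw [hνuniv]
              gcongr
              calc (2:ℝ≥0∞) ^ (2 : ℝ≥0∞).toReal⁻¹ ≤ 2 ^ (1:ℝ) :=
                    ENNReal.rpow_le_rpow_of_exponent_le one_le_two (by norm_num)
                _ = 2 := by simp
          _ = ENNReal.ofReal (2 * η) := by
              rw [ENNReal.ofReal_mul (by norm_num)]
              norm_num
      calc eLpNorm (fun y : Fin n → E => F y - G y) 2 ν
          ≤ _ + _ := htri
        _ ≤ ENNReal.ofReal η + ENNReal.ofReal (2 * η) := add_le_add hgF hgG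
        _ = ENNReal.ofReal (3 * η) := by
            rw [← ENNReal.ofReal_add hη.le (by linarith)]
            ring_nf
    -- transfer the L² distances to P
    have htrans : ∀ (T : (I → E) → Fin n → E), Measurable T → P.map T ≤ ν →
        eLpNorm (fun x => F (T x) - G (T x)) 2 P ≤ ENNReal.ofReal (3 * η) := by
      intro T hT hle
      have hasm : AEStronglyMeasurable (fun y : Fin n → E => F y - G y) (P.map T) :=
        (hFmeas.sub hGmeas).aestronglyMeasurable
      have h1 : eLpNorm ((fun y : Fin n → E => F y - G y) ∘ T) 2 P
          = eLpNorm (fun y : Fin n → E => F y - G y) 2 (P.map T) :=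
        (eLpNorm_map_measure hasm hT.aemeasurable).symm
      calc eLpNorm (fun x => F (T x) - G (T x)) 2 P
          = eLpNorm (fun y : Fin n → E => F y - G y) 2 (P.map T) := h1
        _ ≤ eLpNorm (fun y : Fin n → E => F y - G y) 2 ν := eLpNorm_mono_measure _ hle
        _ ≤ ENNReal.ofReal (3 * η) := hdν
    have hμτle : P.map Tτ ≤ ν := by rw [hν, hμτdef]; exact Measure.le_add_right le_rfl
    have hμσle : P.map Tσ ≤ ν := by
      rw [hν, hμσdef, hμτdef]
      exact Measure.le_add_left le_rfl
    have hAdist : ‖AF - AG‖ ≤ 3 * η := by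
      rw [hAFdef, hAGdef, ← MemLp.toLp_sub haF haG, Lp.norm_toLp]
      refine ENNReal.toReal_le_of_le_ofReal (by positivity) ?_
      exact htrans Tτ hTτm hμτle
    have hBdist : ‖BF - BG‖ ≤ 3 * η := by
      rw [hBFdef, hBGdef, ← MemLp.toLp_sub hbF hbG, Lp.norm_toLp]
      refine ENNReal.toReal_le_of_le_ofReal (by positivity) ?_
      exact htrans Tσ hTσm hμσle
    have hAGnorm : ‖AG‖ ≤ C + 3 * η := by
      calc ‖AG‖ = ‖AF - (AF - AG)‖ := by rw [sub_sub_cancel]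
        _ ≤ ‖AF‖ + ‖AF - AG‖ := norm_sub_le _ _
        _ ≤ C + 3 * η := add_le_add hAFnorm hAdist
    refine ⟨inner ℂ AG BG, hzpos, ?_⟩
    have hsplit : (inner ℂ AF BF : ℂ) - inner ℂ AG BG
        = (inner ℂ (AF - AG) BF : ℂ) + inner ℂ AG (BF - BG) := by
      rw [inner_sub_left, inner_sub_right]; ring
    rw [hsplit]
    calc ‖(inner ℂ (AF - AG) BF : ℂ) + inner ℂ AG (BF - BG)‖
        ≤ ‖(inner ℂ (AF - AG) BF : ℂ)‖ + ‖(inner ℂ AG (BF - BG) : ℂ)‖ := norm_add_le _ _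
      _ ≤ ‖AF - AG‖ * ‖BF‖ + ‖AG‖ * ‖BF - BG‖ :=
          add_le_add (norm_inner_le_norm _ _) (norm_inner_le_norm _ _)
      _ ≤ (3 * η) * C + (C + 3 * η) * (3 * η) := by
          have h1 : (0:ℝ) ≤ 3 * η := by positivity
          refine add_le_add (mul_le_mul hAdist hBFnorm (norm_nonneg _) h1)
            (mul_le_mul hAGnorm hBdist (norm_nonneg _) (by linarith))
      _ ≤ η * (6 * C + 9) := by
          have hsq : η * η ≤ η := mul_le_of_le_one_right hη.le hη1
          have hCη : 0 ≤ C := hC0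
          ring_nf
          nlinarith [hsq, hη.le, hC0]
      _ ≤ (ε / (6 * C + 9)) * (6 * C + 9) := by
          refine mul_le_mul_of_nonneg_right (min_le_right _ _) (by linarith)
      _ = ε := div_mul_cancel₀ ε (by linarith)
  -- conclude
  have hQgoal : (∫ x, conj (F fun i => x (τ i)) * F (fun i => x (σ i)) ∂P)
      = (inner ℂ AF BF : ℂ) := hQF
  rw [hQgoal]
  constructor
  · refine le_of_forall_pos_le_add ?_
    intro ε hε
    obtain ⟨z, ⟨hz1, _⟩, hze⟩ := approx ε hε
    have h1 : |((inner ℂ AF BF : ℂ) - z).re| ≤ ε := by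
      calc |((inner ℂ AF BF : ℂ) - z).re| ≤ ‖(inner ℂ AF BF : ℂ) - z‖ := Complex.abs_re_le_norm _
        _ ≤ ε := hze
    have h2 : ((inner ℂ AF BF : ℂ) - z).re = (inner ℂ AF BF : ℂ).re - z.re := by
      simp [Complex.sub_re]
    rw [h2] at h1
    have := abs_le.mp h1
    linarith [this.1]
  · have him : ∀ ε : ℝ, 0 < ε → |(inner ℂ AF BF : ℂ).im| ≤ 0 + ε := by
      intro ε hε
      obtain ⟨z, ⟨_, hz2⟩, hze⟩ := approx ε hε
      have h1 : |((inner ℂ AF BF : ℂ) - z).im| ≤ ε := by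
        calc |((inner ℂ AF BF : ℂ) - z).im| ≤ ‖(inner ℂ AF BF : ℂ) - z‖ := Complex.abs_im_le_norm _
          _ ≤ ε := hze
      have h2 : ((inner ℂ AF BF : ℂ) - z).im = (inner ℂ AF BF : ℂ).im - z.im := by
        simp [Complex.sub_im]
      rw [h2, hz2, sub_zero] at h1
      linarith
    have h0 : |(inner ℂ AF BF : ℂ).im| ≤ 0 := le_of_forall_pos_le_add him
    exact abs_eq_zero.mp (le_antisymm h0 (abs_nonneg _))
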